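/- Let Θ ≥ 0, let y, z ∈ E, and set w̄ = P_C(y + Θ·(y − z)). Suppose x⁺ ∈ E is an ε-inexact proximal-gradient step from w̄ with step size β > 0 satisfying the majorization condition at (x⁺, w̄), and suppose x⋆ ∈ C is a global minimizer of f. Then ‖x⁺ − x⋆‖² − ‖y − x⋆‖² ≤ Θ·[(‖y − x⋆‖² − ‖z − x⋆‖²) + (Θ + 1)·‖y − z‖²] + ε². -/

import Mathlib

open RealInnerProductSpace Filter Topology

lemma grad_convex_ineq {E : Type*} [NormedAddCommGroup E] [InnerProductSpace ℝ E] [CompleteSpace E]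
    {L : E → ℝ} {g x v : E} (hconv : ConvexOn ℝ Set.univ L)
    (hg : HasGradientAt L g x) : L x + ⟪v - x, g⟫ ≤ L v := by
  have hline : HasDerivAt (fun t : ℝ => x + t • (v - x)) (v - x) 0 := by
    simpa using ((hasDerivAt_id (0:ℝ)).smul_const (v - x)).const_add x
  have hphi : HasDerivAt (fun t : ℝ => L (x + t • (v - x))) ⟪v - x, g⟫ 0 := by
    have hg' : HasFDerivAt L ((InnerProductSpace.toDual ℝ E) g) (x + (0:ℝ) • (v - x)) := by
      simpa using hg.hasFDerivAt
    have := (hg'.comp 0 hline.hasFDerivAt).hasDerivAt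
    simpa [real_inner_comm, Function.comp_def] using this
  have hslope : Tendsto (slope (fun t : ℝ => L (x + t • (v - x))) 0) (𝓝[>] 0)
      (𝓝 ⟪v - x, g⟫) :=
    (hasDerivAt_iff_tendsto_slope.mp hphi).mono_left
      (nhdsWithin_mono _ fun t ht => ne_of_gt ht)
  have hbound : ∀ᶠ t in 𝓝[>] (0:ℝ),
      slope (fun t : ℝ => L (x + t • (v - x))) 0 t ≤ L v - L x := by
    filter_upwards [Ioc_mem_nhdsGT_of_mem (by simp : (0:ℝ) ∈ Set.Ico 0 1)] with t ht
    have hcomb := hconv.2 (Set.mem_univ x) (Set.mem_univ v)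
      (by linarith [ht.1, ht.2] : (0:ℝ) ≤ 1 - t) (le_of_lt ht.1) (by ring)
    have hx' : (1 - t) • x + t • v = x + t • (v - x) := by
      simp [smul_sub, sub_smul]; abel
    rw [hx'] at hcomb
    have hsl : slope (fun t : ℝ => L (x + t • (v - x))) 0 t
        = (L (x + t • (v - x)) - L x) / t := by
      simp [slope_def_field]
    rw [hsl, div_le_iff₀ ht.1]
    simp only [smul_eq_mul] at hcomb
    nlinarith [hcomb]
  have := le_of_tendsto hslope hbound
  linarith

lemma proj_contract {E : Type*} [NormedAddCommGroup E] [InnerProductSpace ℝ E]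
    {C : Set E} (hCconv : Convex ℝ C) {P : E → E} (hPmem : ∀ v, P v ∈ C)
    (hPproj : ∀ v, ∀ c ∈ C, ‖v - P v‖ ≤ ‖v - c‖)
    (v : E) {c : E} (hc : c ∈ C) : ‖P v - c‖ ≤ ‖v - c‖ := by
  -- obtuse angle property
  have hobt : ⟪v - P v, c - P v⟫ ≤ 0 := by
    by_contra h
    push_neg at h
    set i : ℝ := ⟪v - P v, c - P v⟫ with hi
    set K : ℝ := ‖c - P v‖ ^ 2 with hK
    have hKpos : 0 < K := by
      rcases eq_or_lt_of_le (by positivity : (0:ℝ) ≤ K) with h0 | h0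
      · exfalso
        have : c - P v = 0 := by
          have := h0.symm
          rw [hK, pow_eq_zero_iff (n := 2) (by norm_num)] at this
          simpa using this
        rw [hi, this] at h
        simp at h
      · exact h0
    set t : ℝ := min 1 (i / K) with ht
    have ht0 : 0 < t := lt_min one_pos (div_pos h hKpos)
    have ht1 : t ≤ 1 := min_le_left _ _
    have hmemt : P v + t • (c - P v) ∈ C := by
      have := hCconv (hPmem v) hc (by linarith : (0:ℝ) ≤ 1 - t) ht0.le (by ring)
      have he : (1 - t) • P v + t • c = P v + t • (c - P v) := by
        simp [smul_sub, sub_smul]; abel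
      rwa [he] at this
    have hle := hPproj v _ hmemt
    have hsq : ‖v - (P v + t • (c - P v))‖ ^ 2
        = ‖v - P v‖ ^ 2 - 2 * t * i + t ^ 2 * K := by
      have he : v - (P v + t • (c - P v)) = (v - P v) - t • (c - P v) := by abel
      rw [he, norm_sub_sq_real, real_inner_smul_right, norm_smul]
      simp [hi, hK, abs_of_pos ht0]
      ring
    have hle2 : ‖v - P v‖ ^ 2 ≤ ‖v - (P v + t • (c - P v))‖ ^ 2 := by
      apply pow_le_pow_left₀ (norm_nonneg _) hle
    rw [hsq] at hle2
    have hiB : i ≤ t / 2 * K := by nlinarith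
    have htK : t * K ≤ i := by
      calc t * K ≤ (i / K) * K := by
            apply mul_le_mul_of_nonneg_right (min_le_right _ _) hKpos.le
        _ = i := by field_simp
    nlinarith
  have hexp : ‖v - c‖ ^ 2 = ‖v - P v‖ ^ 2 - 2 * ⟪v - P v, c - P v⟫ + ‖P v - c‖ ^ 2 := by
    have he : v - c = (v - P v) - (c - P v) := by abel
    rw [he, norm_sub_sq_real]
    have : ‖c - P v‖ = ‖P v - c‖ := by rw [norm_sub_rev]
    rw [this]
  have h2 : ‖P v - c‖ ^ 2 ≤ ‖v - c‖ ^ 2 := by nlinarith [sq_nonneg ‖v - P v‖]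
  exact (pow_le_pow_iff_left₀ (norm_nonneg _) (norm_nonneg _) two_ne_zero).mp h2

set_option maxHeartbeats 1000000 in
/-- If `Θ ≥ 0`, `w̄ = P_C(y + Θ(y − z))`, `x⁺` is an `ε`-inexact
proximal-gradient step from `w̄` with step size `β > 0` satisfying the majorization
condition at `(x⁺, w̄)`, and `x⋆ ∈ C` is a global minimizer of `f`, then
`‖x⁺ − x⋆‖² − ‖y − x⋆‖² ≤ Θ((‖y − x⋆‖² − ‖z − x⋆‖²) + (Θ + 1)‖y − z‖²) + ε²`. -/
theorem pnpg_iterate_distance_recursion {E : Type*} [NormedAddCommGroup E]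
    [InnerProductSpace ℝ E] [FiniteDimensional ℝ E]
    (L R f : E → ℝ) (gradL : E → E)
    (hLconv : ConvexOn ℝ Set.univ L)
    (hLgrad : ∀ x, HasGradientAt L (gradL x) x)
    (hRconv : ConvexOn ℝ Set.univ R)
    (hf : ∀ x, f x = L x + R x)
    (C : Set E) (hCne : C.Nonempty) (hCcl : IsClosed C) (hCconv : Convex ℝ C)
    (P : E → E) (hPmem : ∀ v, P v ∈ C)
    (hPproj : ∀ v, ∀ c ∈ C, ‖v - P v‖ ≤ ‖v - c‖)
    (Θ : ℝ) (hΘ : 0 ≤ Θ) (y z : E)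
    (wbar : E) (hwbar : wbar = P (y + Θ • (y - z)))
    (xplus : E) (β ε : ℝ) (hβ : 0 < β) (hε : 0 ≤ ε)
    (hprox : ∀ v, R v ≥ R xplus +
      ⟪v - xplus, β⁻¹ • (wbar - β • gradL wbar - xplus)⟫ - ε ^ 2 / (2 * β))
    (hmaj : L xplus ≤ L wbar + ⟪xplus - wbar, gradL wbar⟫ + ‖xplus - wbar‖ ^ 2 / (2 * β))
    (xstar : E) (hxstarC : xstar ∈ C) (hmin : ∀ v, f xstar ≤ f v) :
    ‖xplus - xstar‖ ^ 2 - ‖y - xstar‖ ^ 2 ≤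
      Θ * ((‖y - xstar‖ ^ 2 - ‖z - xstar‖ ^ 2) + (Θ + 1) * ‖y - z‖ ^ 2) + ε ^ 2 := by
  set g := gradL wbar with hg
  -- Step 1: ‖xplus - xstar‖² ≤ ‖wbar - xstar‖² + ε²
  have hR := hprox xstar
  have hL : L wbar + ⟪xstar - wbar, g⟫ ≤ L xstar :=
    grad_convex_ineq hLconv (hLgrad wbar)
  have hmin' : L xstar + R xstar ≤ L xplus + R xplus := by
    have := hmin xplus; rw [hf, hf] at this; exact this
  -- expand the inner product in hR
  have hRinner : ⟪xstar - xplus, β⁻¹ • (wbar - β • g - xplus)⟫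
      = β⁻¹ * (⟪xstar - xplus, wbar - xplus⟫ - β * ⟪xstar - xplus, g⟫) := by
    rw [real_inner_smul_right]
    congr 1
    have he : wbar - β • g - xplus = (wbar - xplus) - β • g := by abel
    rw [he, inner_sub_right, real_inner_smul_right]
  rw [hRinner] at hR
  -- inner product splitting
  have hsplit : ⟪xstar - wbar, g⟫ = ⟪xstar - xplus, g⟫ + ⟪xplus - wbar, g⟫ := by
    rw [← inner_add_left]; congr 1; abel
  -- norm expansion
  have hnorm : ‖wbar - xstar‖ ^ 2
      = ‖xplus - wbar‖ ^ 2 - 2 * ⟪xstar - xplus, wbar - xplus⟫ + ‖xplus - xstar‖ ^ 2 := by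
    have he : wbar - xstar = (wbar - xplus) + (xplus - xstar) := by abel
    rw [he, norm_add_sq_real]
    have h1 : ‖wbar - xplus‖ = ‖xplus - wbar‖ := norm_sub_rev _ _
    have h2 : ⟪wbar - xplus, xplus - xstar⟫ = - ⟪xstar - xplus, wbar - xplus⟫ := by
      rw [real_inner_comm]
      have : xplus - xstar = -(xstar - xplus) := by abel
      rw [this, inner_neg_left]
    rw [h1, h2]; ring
  have hstep1 : ‖xplus - xstar‖ ^ 2 ≤ ‖wbar - xstar‖ ^ 2 + ε ^ 2 := by
    have hb : (0:ℝ) < 2 * β := by linarith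
    have key : 0 ≤ (‖xplus - wbar‖ ^ 2 - 2 * ⟪xstar - xplus, wbar - xplus⟫ + ε ^ 2) / (2 * β) := by
      have hβne : β ≠ 0 := ne_of_gt hβ
      have e1 : β⁻¹ * (⟪xstar - xplus, wbar - xplus⟫ - β * ⟪xstar - xplus, g⟫)
          = ⟪xstar - xplus, wbar - xplus⟫ / β - ⟪xstar - xplus, g⟫ := by
        field_simp
      rw [e1] at hR
      rw [hsplit] at hL
      have := hmaj
      -- combine: hmin' + hL + hmaj + hR
      have hcomb : 0 ≤ ‖xplus - wbar‖ ^ 2 / (2 * β)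
          - ⟪xstar - xplus, wbar - xplus⟫ / β + ε ^ 2 / (2 * β) := by linarith
      have e2 : ‖xplus - wbar‖ ^ 2 / (2 * β) - ⟪xstar - xplus, wbar - xplus⟫ / β
          + ε ^ 2 / (2 * β)
          = (‖xplus - wbar‖ ^ 2 - 2 * ⟪xstar - xplus, wbar - xplus⟫ + ε ^ 2) / (2 * β) := by
        field_simp
      linarith [e2 ▸ hcomb]
    have := (div_nonneg_iff.mp key)
    rcases this with ⟨h1, _⟩ | ⟨_, h2⟩
    · linarith [hnorm]
    · linarith
  -- Step 2: projection contraction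
  have hstep2 : ‖wbar - xstar‖ ≤ ‖(y + Θ • (y - z)) - xstar‖ := by
    rw [hwbar]
    exact proj_contract hCconv hPmem hPproj _ hxstarC
  have hstep2' : ‖wbar - xstar‖ ^ 2 ≤ ‖(y + Θ • (y - z)) - xstar‖ ^ 2 :=
    pow_le_pow_left₀ (norm_nonneg _) hstep2 2
  -- Step 3: algebraic identity
  have hid : ‖(y + Θ • (y - z)) - xstar‖ ^ 2
      = ‖y - xstar‖ ^ 2 + Θ * ((‖y - xstar‖ ^ 2 - ‖z - xstar‖ ^ 2)
        + (Θ + 1) * ‖y - z‖ ^ 2) := by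
    have he : (y + Θ • (y - z)) - xstar = (y - xstar) + Θ • (y - z) := by abel
    rw [he, norm_add_sq_real, real_inner_smul_right, norm_smul]
    have he2 : ‖y - z‖ ^ 2 = ‖y - xstar‖ ^ 2 - 2 * ⟪y - xstar, z - xstar⟫ + ‖z - xstar‖ ^ 2 := by
      have : y - z = (y - xstar) - (z - xstar) := by abel
      rw [this, norm_sub_sq_real]
    have he3 : ⟪y - xstar, y - z⟫ = ‖y - xstar‖ ^ 2 - ⟪y - xstar, z - xstar⟫ := by
      have : y - z = (y - xstar) - (z - xstar) := by abel
      rw [this, inner_sub_right, real_inner_self_eq_norm_sq]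
    rw [he3]
    simp only [Real.norm_eq_abs, abs_of_nonneg hΘ, mul_pow]
    nlinarith [he2]
  nlinarith [hstep1, hstep2', hid]
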